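/- In the constrained setting with n ≥ 3 identical linear servers, where a mass 1 of selfish jobs may use only servers 1 and 2 and a mass n−1 of machine-scheduled jobs may use only servers 2 through n, for any attack strength α ≥ 0, every constrained team equilibrium x̃ satisfies C^α(x̃) = min{ n/(n−1), 1 + α/n }, which equals the cost of a fully selfish equilibrium obtained by converting all jobs to selfish jobs (unconstrained among all n servers). -/

import Mathlib

open Finset

/-- System cost `C^α(x) = (1/n) ∑ᵢ xᵢ τᵢ(xᵢ) + α x₁ / n` (server 1 is index 0). -/
noncomputable def cost (n : ℕ) [NeZero n] (τ : Fin n → ℝ → ℝ) (α : ℝ) (x : Fin n → ℝ) : ℝ :=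
  (∑ i, x i * τ i (x i)) / (n : ℝ) + α * x 0 / (n : ℝ)

/-- Attacked delay functions: `τ₁^α = τ₁ + α`, `τᵢ^α = τᵢ` for `i > 1`. -/
noncomputable def tauA (n : ℕ) [NeZero n] (τ : Fin n → ℝ → ℝ) (α : ℝ) (i : Fin n) (z : ℝ) : ℝ :=
  τ i z + if i = 0 then α else 0

/-- A (partial) scheduling profile of total mass `mass`: nonnegative with entries summing to `mass`. -/
def IsProfile (n : ℕ) (mass : ℝ) (x : Fin n → ℝ) : Prop :=
  (∀ i, 0 ≤ x i) ∧ ∑ i, x i = mass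

/-- Identical linear delay functions `τᵢ(x) = x`. -/
def lin (n : ℕ) : Fin n → ℝ → ℝ := fun _ z => z

/-- A fully selfish equilibrium: a scheduling profile of total mass `n` in which every
job with positive mass is on a server of minimal (attacked) delay. -/
def IsSelfishEq (n : ℕ) [NeZero n] (α : ℝ) (x : Fin n → ℝ) : Prop :=
  IsProfile n (n : ℝ) x ∧
  ∀ i, 0 < x i → ∀ j, tauA n (lin n) α i (x i) ≤ tauA n (lin n) α j (x j)

/-- Constrained team equilibrium: mass 1 of selfish jobs restricted to servers 1 and 2
(indices 0 and 1), machine schedulers restricted to servers 2,…,n (indices ≠ 0), with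
machine masses `r k` summing to `n - 1`. -/
def IsConstrainedTeamEq (n m : ℕ) [NeZero n] (α : ℝ) (r : Fin m → ℝ)
    (xs : Fin n → ℝ) (xk : Fin m → Fin n → ℝ) : Prop :=
  (∀ i, 0 ≤ xs i) ∧ xs 0 + xs 1 = 1 ∧ (∀ i, i ≠ 0 → i ≠ 1 → xs i = 0) ∧
  (∀ k, (∀ i, 0 ≤ xk k i) ∧ xk k 0 = 0 ∧ ∑ i, xk k i = r k) ∧
  (∀ k, ∀ y : Fin n → ℝ, (∀ i, 0 ≤ y i) → y 0 = 0 → (∑ i, y i) = r k →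
    cost n (lin n) α (xs + ∑ j, xk j) ≤ cost n (lin n) α (xs + y + ∑ j ∈ univ.erase k, xk j)) ∧
  (0 < xs 0 → (xs + ∑ l, xk l) 0 + α ≤ (xs + ∑ l, xk l) 1) ∧
  (0 < xs 1 → (xs + ∑ l, xk l) 1 ≤ (xs + ∑ l, xk l) 0 + α)

lemma flat_sum {n : ℕ} [NeZero n] (f : Fin n → ℝ) (c : ℝ)
    (h : ∀ i, i ≠ (0 : Fin n) → f i = c) :
    ∑ i, f i = f 0 + ((n:ℝ) - 1) * c := by
  rw [← Finset.add_sum_erase _ f (Finset.mem_univ 0)]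
  congr 1
  rw [Finset.sum_congr rfl (fun i hi => h i (Finset.ne_of_mem_erase hi)),
    Finset.sum_const, Finset.card_erase_of_mem (Finset.mem_univ _), Finset.card_univ,
    Fintype.card_fin, nsmul_eq_mul]
  have h1 : (1:ℕ) ≤ n := NeZero.one_le
  push_cast [Nat.cast_sub h1]
  ring

lemma key {n : ℕ} [NeZero n] (hn : 3 ≤ n) (α : ℝ) (x : Fin n → ℝ) (M : ℝ)
    (hM : ∀ i, i ≠ (0:Fin n) → x i = M)
    (hsum : ∑ i, x i = (n:ℝ))
    (hcase : (x 0 = 0 ∧ M ≤ α) ∨ (0 < x 0 ∧ M = x 0 + α)) :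
    cost n (lin n) α x = min ((n:ℝ)/((n:ℝ)-1)) (1 + α/(n:ℝ)) := by
  have hN : (3:ℝ) ≤ (n:ℝ) := by exact_mod_cast hn
  set N := (n:ℝ) with hNdef
  have hN0 : 0 < N := by linarith
  have hN1 : 0 < N - 1 := by linarith
  set a := x 0 with hadef
  have hs : a + (N-1)*M = N := by
    have h := flat_sum x M hM; rw [hsum] at h; linarith
  have hcost : cost n (lin n) α x =
      (a*a + (N-1)*(M*M))/N + α*a/N := by
    unfold cost lin
    rw [flat_sum (fun i => x i * x i) (M*M) (fun i hi => show x i * x i = M*M by rw [hM i hi])]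
  rw [hcost]
  have hmm : 1 + α/N = (N+α)/N := by field_simp
  rcases hcase with ⟨h0, hMα⟩ | ⟨h0, hMa⟩
  · rw [h0] at hs ⊢
    have hMval : (N-1) * M = N := by linarith
    rw [min_eq_left]
    · rw [eq_div_iff (by linarith : N - 1 ≠ 0)]
      field_simp
      nlinarith [hMval]
    · rw [hmm, div_le_div_iff₀ hN1 hN0]
      nlinarith [hMval, hMα]
  · have hNM : N*M = N + α := by linear_combination hs + hMa
    have hgoal : a*a + (N-1)*(M*M) + α*a = M*N := by
      linear_combination (-a)*hMa + M*hs
    rw [min_eq_right]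
    · rw [← add_div, hgoal, mul_div_assoc, div_self (ne_of_gt hN0), mul_one, hmm,
        eq_div_iff (ne_of_gt hN0)]
      linarith [hNM]
    · rw [hmm, div_le_div_iff₀ hN0 hN1]
      have ha' : 0 < M - α := by rw [hMa]; linarith
      nlinarith [hNM]

lemma selfish_cost {n : ℕ} [NeZero n] (hn : 3 ≤ n) (α : ℝ) (hα : 0 ≤ α)
    (x : Fin n → ℝ) (h : IsSelfishEq n α x) :
    cost n (lin n) α x = min ((n:ℝ)/((n:ℝ)-1)) (1 + α/(n:ℝ)) := by
  obtain ⟨⟨hnn, hsum⟩, hmin⟩ := h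
  have hv1 : ((1:Fin n):ℕ) = 1 := by
    rw [Fin.val_one']; exact Nat.mod_eq_of_lt (by omega)
  have h10 : (1:Fin n) ≠ 0 := Fin.ne_of_val_ne (by rw [hv1]; exact one_ne_zero)
  have hposall : ∀ i : Fin n, i ≠ 0 → 0 < x i := by
    intro i hi
    by_contra hle; push_neg at hle
    have hxi : x i = 0 := le_antisymm hle (hnn i)
    obtain ⟨j, hj⟩ : ∃ j, 0 < x j := by
      by_contra hall; push_neg at hall
      have h1 : ∑ t, x t ≤ 0 := Finset.sum_nonpos (fun t _ => hall t)
      rw [hsum] at h1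
      have h2 : (0:ℝ) < (n:ℝ) := by positivity
      linarith
    have hc := hmin j hj i
    unfold tauA lin at hc
    by_cases hj0 : j = 0
    · subst hj0; simp [hi, hxi] at hc; linarith
    · simp [hi, hj0, hxi] at hc; linarith
  have hL : ∀ i, i ≠ (0:Fin n) → x i = x 1 := by
    intro i hi
    have h1 := hmin i (hposall i hi) 1
    have h2 := hmin 1 (hposall 1 h10) i
    unfold tauA lin at h1 h2
    simp [hi, h10] at h1 h2
    linarith
  apply key hn α x (x 1) hL hsum
  by_cases h0 : x 0 = 0
  · left
    refine ⟨h0, ?_⟩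
    have hc := hmin 1 (hposall 1 h10) 0
    unfold tauA lin at hc
    simp [h10, h0] at hc
    linarith
  · right
    have hpos0 : 0 < x 0 := lt_of_le_of_ne (hnn 0) (Ne.symm h0)
    refine ⟨hpos0, ?_⟩
    have hA := hmin 0 hpos0 1
    have hB := hmin 1 (hposall 1 h10) 0
    unfold tauA lin at hA hB
    simp [h10] at hA hB
    linarith

/-- in the constrained setting, every constrained team equilibrium has
cost `min {n/(n−1), 1 + α/n}`, equal to the cost of any fully selfish equilibrium. -/
theorem constrained_team_eq_cost (n m : ℕ) [NeZero n] (hn : 3 ≤ n) (hm : 1 ≤ m)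
    (α : ℝ) (hα : 0 ≤ α)
    (r : Fin m → ℝ) (hr : ∀ k, 0 ≤ r k) (hrsum : ∑ k, r k = (n : ℝ) - 1)
    (xs : Fin n → ℝ) (xk : Fin m → Fin n → ℝ)
    (heq : IsConstrainedTeamEq n m α r xs xk) :
    cost n (lin n) α (xs + ∑ j, xk j) = min ((n : ℝ) / ((n : ℝ) - 1)) (1 + α / n) ∧
    ∀ xhat : Fin n → ℝ, IsSelfishEq n α xhat →
      cost n (lin n) α xhat = min ((n : ℝ) / ((n : ℝ) - 1)) (1 + α / n) := by
  constructor
  · -- team equilibrium cost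
    obtain ⟨hxs_nn, hxs01, hxs2, hxk, hopt, hsel0, hsel1⟩ := heq
    have hN : (3:ℝ) ≤ (n:ℝ) := by exact_mod_cast hn
    set x : Fin n → ℝ := xs + ∑ j, xk j with hxdef
    have hv1 : ((1:Fin n):ℕ) = 1 := by
      rw [Fin.val_one']; exact Nat.mod_eq_of_lt (by omega)
    have h10 : (1:Fin n) ≠ 0 := Fin.ne_of_val_ne (by rw [hv1]; exact one_ne_zero)
    set i2 : Fin n := ⟨2, by omega⟩ with hi2def
    have h20 : i2 ≠ 0 := Fin.ne_of_val_ne (by simp [hi2def])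
    have h21 : i2 ≠ 1 := Fin.ne_of_val_ne (by rw [hv1]; simp [hi2def])
    have hxapp : ∀ t, x t = xs t + ∑ k, xk k t := by
      intro t; simp [hxdef, Finset.sum_apply]
    have hx_nn : ∀ t, 0 ≤ x t := by
      intro t; rw [hxapp]
      exact add_nonneg (hxs_nn t) (Finset.sum_nonneg fun k _ => (hxk k).1 t)
    have hx0 : x 0 = xs 0 := by
      rw [hxapp]
      rw [Finset.sum_eq_zero (fun k _ => (hxk k).2.1)]; ring
    have hxssum : ∑ t, xs t = 1 := by
      rw [← Finset.add_sum_erase _ xs (Finset.mem_univ 0),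
        ← Finset.add_sum_erase _ xs (Finset.mem_erase.mpr ⟨h10, Finset.mem_univ 1⟩)]
      rw [Finset.sum_eq_zero (fun t ht => hxs2 t (Finset.ne_of_mem_erase (Finset.mem_of_mem_erase ht)) (Finset.ne_of_mem_erase ht))]
      linarith
    have hsum : ∑ t, x t = (n:ℝ) := by
      have h1 : ∑ t, x t = ∑ t, xs t + ∑ t, ∑ k, xk k t := by
        rw [← Finset.sum_add_distrib]
        exact Finset.sum_congr rfl fun t _ => hxapp t
      rw [h1, hxssum, Finset.sum_comm]
      rw [Finset.sum_congr rfl (fun k _ => (hxk k).2.2), hrsum]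
      ring
    -- exchange lemma
    have exch : ∀ (k : Fin m) (i j : Fin n), i ≠ 0 → j ≠ 0 → 0 < xk k i → x i ≤ x j := by
      intro k i j hi hj hpos
      by_cases hij : i = j
      · exact le_of_eq (by rw [hij])
      have hstep : ∀ ε : ℝ, 0 < ε → ε ≤ xk k i → x i ≤ x j + ε := by
        intro ε hε hεle
        set δ : Fin n → ℝ := fun t => (if t = j then ε else 0) - (if t = i then ε else 0)
          with hδdef
        have hδi : δ i = -ε := by simp [hδdef, hij]
        have hδj : δ j = ε := by
          simp [hδdef]; intro h; exact absurd h.symm hij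
        have hδ0 : δ 0 = 0 := by simp [hδdef, Ne.symm hi, Ne.symm hj]
        set y : Fin n → ℝ := fun t => xk k t + δ t with hydef
        have hynn : ∀ t, 0 ≤ y t := by
          intro t
          by_cases h1 : t = i
          · subst h1; simp only [hydef, hδi]; linarith
          by_cases h2 : t = j
          · subst h2; simp only [hydef, hδj]; have := (hxk k).1 t; linarith
          · have : δ t = 0 := by simp [hδdef, h1, h2]
            simp only [hydef, this]; have := (hxk k).1 t; linarith
        have hy0 : y 0 = 0 := by simp only [hydef, hδ0, (hxk k).2.1]; ring
        have hysum : ∑ t, y t = r k := by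
          simp only [hydef, hδdef]
          rw [Finset.sum_add_distrib, Finset.sum_sub_distrib,
            Finset.sum_ite_eq' univ j (fun _ => ε), Finset.sum_ite_eq' univ i (fun _ => ε)]
          simp [(hxk k).2.2]
        have hkey := hopt k y hynn hy0 hysum
        have hprof : (xs + y + ∑ j' ∈ univ.erase k, xk j') = fun t => x t + δ t := by
          funext t
          simp only [Pi.add_apply, Finset.sum_apply, hydef]
          have := Finset.add_sum_erase univ (fun j' => xk j' t) (Finset.mem_univ k)
          rw [hxapp t]
          linarith
        rw [hprof] at hkey
        have hsq : ∑ t, (x t + δ t) * (x t + δ t)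
            = ∑ t, x t * x t + (2*ε*(x j - x i) + 2*(ε*ε)) := by
          have hpt : ∀ t, (x t + δ t) * (x t + δ t)
              = x t * x t + ((if t = j then 2*(x t)*ε + ε*ε else 0)
                + (if t = i then -(2*(x t)*ε) + ε*ε else 0)) := by
            intro t
            by_cases h1 : t = j
            · have h2 : ¬ t = i := fun h => hij (h ▸ h1)
              subst h1; rw [hδj, if_neg h2, if_pos (show t = t from rfl)]; ring
            by_cases h2 : t = i
            · subst h2; rw [hδi, if_neg h1, if_pos (show t = t from rfl)]; ring
            · have : δ t = 0 := by simp [hδdef, h1, h2]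
              simp only [this, if_neg h1, if_neg h2]; ring
          rw [Finset.sum_congr rfl (fun t _ => hpt t), Finset.sum_add_distrib,
            Finset.sum_add_distrib, Finset.sum_ite_eq' univ j, Finset.sum_ite_eq' univ i]
          simp only [Finset.mem_univ, if_pos]
          ring
        unfold cost lin at hkey
        simp only [] at hkey
        rw [hsq] at hkey
        rw [hδ0, add_zero] at hkey
        have hN0 : (0:ℝ) < (n:ℝ) := by linarith
        have h' : (∑ t, x t * x t)/(n:ℝ)
            ≤ (∑ t, x t * x t + (2*ε*(x j - x i) + 2*(ε*ε)))/(n:ℝ) := by linarith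
        have hS := (div_le_div_iff_of_pos_right hN0).mp h'
        nlinarith [hS, hε]
      refine le_of_forall_pos_le_add (fun ε hε => ?_)
      have h1 := hstep (min ε (xk k i)) (lt_min hε hpos) (min_le_right _ _)
      have h2 := min_le_left ε (xk k i)
      linarith
    have hxi_machine : ∀ i : Fin n, i ≠ 0 → i ≠ 1 → x i = ∑ k, xk k i := by
      intro i h0 h1; rw [hxapp, hxs2 i h0 h1]; ring
    have hle : ∀ (i j : Fin n), i ≠ 0 → i ≠ 1 → j ≠ 0 → x i ≤ x j := by
      intro i j hi0 hi1 hj0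
      by_cases hz : x i = 0
      · rw [hz]; exact hx_nn j
      · have hpos : 0 < ∑ k, xk k i := by
          rw [← hxi_machine i hi0 hi1]
          exact lt_of_le_of_ne (hx_nn i) (Ne.symm hz)
        obtain ⟨k, hk⟩ : ∃ k, 0 < xk k i := by
          by_contra hc; push_neg at hc
          have : ∑ k, xk k i = 0 :=
            Finset.sum_eq_zero fun k _ => le_antisymm (hc k) ((hxk k).1 i)
          rw [this] at hpos; exact lt_irrefl 0 hpos
        exact exch k i j hi0 hj0 hk
    set M := x i2 with hMdef
    have hflat2 : ∀ i, i ≠ 0 → i ≠ 1 → x i = M := fun i h0 h1 =>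
      le_antisymm (hle i i2 h0 h1 h20) (hle i2 i h20 h21 h0)
    have hM_le_x1 : M ≤ x 1 := hle i2 1 h20 h21 h10
    have hsum3 : x 0 + x 1 + ((n:ℝ)-2)*M = (n:ℝ) := by
      have e1 := Finset.add_sum_erase univ x (Finset.mem_univ 0)
      have e2 := Finset.add_sum_erase (univ.erase 0) x
        (Finset.mem_erase.mpr ⟨h10, Finset.mem_univ 1⟩)
      have e3 : ∑ t ∈ (univ.erase 0).erase 1, x t = ((n:ℝ)-2)*M := by
        rw [Finset.sum_congr rfl (fun t ht => hflat2 t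
          (Finset.ne_of_mem_erase (Finset.mem_of_mem_erase ht)) (Finset.ne_of_mem_erase ht)),
          Finset.sum_const,
          Finset.card_erase_of_mem (Finset.mem_erase.mpr ⟨h10, Finset.mem_univ 1⟩),
          Finset.card_erase_of_mem (Finset.mem_univ _), Finset.card_univ, Fintype.card_fin,
          nsmul_eq_mul]
        have h2 : (2:ℕ) ≤ n := by omega
        have hnn2 : n - 1 - 1 = n - 2 := by omega
        rw [hnn2]
        push_cast [Nat.cast_sub h2]
        ring
      rw [e3] at e2
      rw [← e2] at e1
      rw [hsum] at e1
      linarith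
    have hx1M : x 1 = M := by
      by_cases hmach : 0 < ∑ k, xk k 1
      · obtain ⟨k, hk⟩ : ∃ k, 0 < xk k 1 := by
          by_contra hc; push_neg at hc
          have : ∑ k, xk k 1 = 0 :=
            Finset.sum_eq_zero fun k _ => le_antisymm (hc k) ((hxk k).1 1)
          rw [this] at hmach; exact lt_irrefl 0 hmach
        exact le_antisymm (exch k 1 i2 h10 h20 hk) hM_le_x1
      · push_neg at hmach
        have hmach0 : ∑ k, xk k 1 = 0 :=
          le_antisymm hmach (Finset.sum_nonneg fun k _ => (hxk k).1 1)
        have h1s : x 1 = xs 1 := by rw [hxapp, hmach0]; ring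
        have hxs1le : xs 1 ≤ 1 := by linarith [hxs_nn 0]
        have hx0le : x 0 ≤ 1 := by rw [hx0]; linarith [hxs_nn 1]
        have hM1 : 1 ≤ M := by nlinarith [hsum3, h1s, hxs1le, hx0le]
        exact le_antisymm (by linarith) hM_le_x1
    have hflat : ∀ i, i ≠ (0:Fin n) → x i = M := by
      intro i h0
      by_cases h1 : i = 1
      · rw [h1]; exact hx1M
      · exact hflat2 i h0 h1
    apply key hn α x M hflat hsum
    have hsum' : x 0 + ((n:ℝ)-1)*M = (n:ℝ) := by
      have h := flat_sum x M hflat; rw [hsum] at h; linarith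
    by_cases h0 : xs 0 = 0
    · left
      refine ⟨by rw [hx0, h0], ?_⟩
      have hxs1 : 0 < xs 1 := by rw [show xs 1 = 1 - xs 0 by linarith, h0]; norm_num
      have hB := hsel1 hxs1
      rw [hx1M] at hB
      rw [hx0, h0] at hB
      linarith
    · right
      have hxs0pos : 0 < xs 0 := lt_of_le_of_ne (hxs_nn 0) (Ne.symm h0)
      have hA := hsel0 hxs0pos
      rw [hx1M] at hA
      refine ⟨by rw [hx0]; exact hxs0pos, ?_⟩
      by_cases h1 : xs 0 = 1
      · have hx01 : x 0 = 1 := by rw [hx0, h1]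
        have hMeq1 : M = 1 := by
          have hc : ((n:ℝ)-1)*M = ((n:ℝ)-1)*1 := by rw [hx01] at hsum'; linarith
          exact mul_left_cancel₀ (by linarith) hc
        have hα0 : α = 0 := by rw [hx01, hMeq1] at hA; linarith
        rw [hMeq1, hx01, hα0]; ring
      · have hxs1pos : 0 < xs 1 := by
          have hle1 : xs 0 ≤ 1 := by linarith [hxs_nn 1]
          have : xs 0 < 1 := lt_of_le_of_ne hle1 h1
          linarith
        have hB := hsel1 hxs1pos
        rw [hx1M] at hB
        exact le_antisymm hB hA
  · intro xhat hx
    exact selfish_cost hn α hα xhat hx
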